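/- Let a_1 ≥ a_2 ≥ ... ≥ a_n > 0 and b_1 ≥ b_2 ≥ ... ≥ b_n > 0 be such that, after sorting agents by b_i/a_i nondecreasingly, for every i with b_i > a_i one has a_i/b_i ≥ i/(n−k+i), where k = |{j : b_j > a_j}|, and a_i ≥ b_i for all i > k. Then ∏_{i=1}^n a_i ≥ (1/C(n, k)) · ∏_{i=1}^n b_i ≥ (1/C(n, ⌊n/2⌋)) · ∏_{i=1}^n b_i, where C(n,k) is the binomial coefficient. (This is the core computation in the proof that 1-GHR implies a C(n,⌊n/2⌋)^{1/n}-approximation of maximum Nash welfare.) -/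

import Mathlib

lemma prod_shift_factorial (m : ℕ) : ∀ k : ℕ,
    (∏ i ∈ Finset.range k, (m + i + 1)) * m.factorial = (m + k).factorial := by
  intro k
  induction k with
  | zero => simp
  | succ k ih =>
    rw [Finset.prod_range_succ, mul_right_comm, ih]
    rw [← Nat.add_assoc, Nat.factorial_succ, Nat.mul_comm]

theorem sorted_ratio_product_bound {n k : ℕ} (hk : k ≤ n)
    (a b : Fin n → ℝ) (ha : ∀ i, 0 < a i) (hb : ∀ i, 0 < b i)
    (hsorted : ∀ i j : Fin n, i ≤ j → a i / b i ≤ a j / b j)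
    (hlow : ∀ i : Fin n, (i : ℕ) < k →
        a i / b i ≥ ((i : ℕ) + 1 : ℝ) / ((n : ℝ) - k + (i : ℕ) + 1))
    (hhigh : ∀ i : Fin n, k ≤ (i : ℕ) → a i / b i ≥ 1) :
    (∏ i, a i) ≥ (1 / (n.choose k : ℝ)) * ∏ i, b i ∧
    (∏ i, a i) ≥ (1 / (n.choose (n / 2) : ℝ)) * ∏ i, b i := by
  set m := n - k with hm
  have hmk : m + k = n := Nat.sub_add_cancel hk
  -- the lower-bound function
  set r : Fin n → ℝ := fun i => if (i : ℕ) < k then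
      ((i : ℕ) + 1 : ℝ) / ((m : ℝ) + (i : ℕ) + 1) else 1 with hr
  have hden : ∀ i : ℕ, (0 : ℝ) < (m : ℝ) + i + 1 := by
    intro i; positivity
  have hrpos : ∀ i : Fin n, 0 < r i := by
    intro i
    by_cases h : (i : ℕ) < k <;> simp [hr, h]
    · exact div_pos (by positivity) (hden i)
  have hcast : ((n : ℝ) - k : ℝ) = (m : ℝ) := by
    rw [hm, Nat.cast_sub hk]
  have hrle : ∀ i : Fin n, r i ≤ a i / b i := by
    intro i
    by_cases h : (i : ℕ) < k
    · have := hlow i h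
      simp only [hr, h, if_true]
      rw [hcast] at this
      linarith [this]
    · simpa [hr, h] using hhigh i (le_of_not_gt h)
  -- product of r equals 1 / choose
  have hchoosepos : 0 < (n.choose k : ℝ) := by
    exact_mod_cast Nat.choose_pos hk
  have hprod_r : ∏ i, r i = 1 / (n.choose k : ℝ) := by
    rw [Fin.prod_univ_eq_prod_range (fun i => if i < k then
        ((i : ℕ) + 1 : ℝ) / ((m : ℝ) + i + 1) else 1)]
    rw [← Finset.prod_subset (Finset.range_subset_range.2 hk)
      (by intro x _ hx; simp at hx; simp [Nat.le_of_not_lt, hx])]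
    have : ∏ i ∈ Finset.range k, (if i < k then
        ((i : ℕ) + 1 : ℝ) / ((m : ℝ) + i + 1) else 1)
        = (∏ i ∈ Finset.range k, ((i : ℕ) + 1 : ℝ)) /
          (∏ i ∈ Finset.range k, ((m : ℝ) + i + 1)) := by
      rw [← Finset.prod_div_distrib]
      apply Finset.prod_congr rfl
      intro x hx
      simp [Finset.mem_range.1 hx]
    rw [this]
    have h1 : ∏ i ∈ Finset.range k, ((i : ℕ) + 1 : ℝ) = (k.factorial : ℝ) := by
      exact_mod_cast congrArg (Nat.cast : ℕ → ℝ)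
        (Finset.prod_range_add_one_eq_factorial k)
    have h2 : ∏ i ∈ Finset.range k, ((m : ℝ) + i + 1)
        = ((∏ i ∈ Finset.range k, (m + i + 1) : ℕ) : ℝ) := by
      rw [Nat.cast_prod]
      exact Finset.prod_congr rfl fun x _ => by push_cast; ring
    rw [h1, h2]
    have key := prod_shift_factorial m k
    rw [hmk] at key
    have hchoose := Nat.choose_mul_factorial_mul_factorial hk
    have hPpos : 0 < ∏ i ∈ Finset.range k, (m + i + 1) :=
      Finset.prod_pos fun i _ => Nat.succ_pos _
    have hnat : k.factorial * n.choose k = ∏ i ∈ Finset.range k, (m + i + 1) := by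
      apply Nat.eq_of_mul_eq_mul_right m.factorial_pos
      rw [key, ← hchoose, hm]
      ring
    have hP' : ((∏ i ∈ Finset.range k, (m + i + 1) : ℕ) : ℝ) ≠ 0 := by
      exact_mod_cast hPpos.ne'
    rw [div_eq_div_iff hP' hchoosepos.ne']
    rw [one_mul]
    exact_mod_cast congrArg (Nat.cast : ℕ → ℝ) hnat
  -- main inequality
  have hbprod : 0 < ∏ i, b i := Finset.prod_pos fun i _ => hb i
  have hmain : ∏ i, a i ≥ (1 / (n.choose k : ℝ)) * ∏ i, b i := by
    have h1 : ∏ i, r i ≤ ∏ i, (a i / b i) :=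
      Finset.prod_le_prod (fun i _ => (hrpos i).le) (fun i _ => hrle i)
    have h2 : ∏ i, (a i / b i) = (∏ i, a i) / ∏ i, b i :=
      Finset.prod_div_distrib (f := a) (g := b)
    rw [hprod_r, h2, le_div_iff₀ hbprod] at h1
    linarith
  refine ⟨hmain, le_trans ?_ hmain⟩
  have hle : (n.choose k : ℝ) ≤ (n.choose (n / 2) : ℝ) := by
    exact_mod_cast Nat.choose_le_middle k n
  have : 1 / (n.choose (n / 2) : ℝ) ≤ 1 / (n.choose k : ℝ) :=
    one_div_le_one_div_of_le hchoosepos hle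
  exact mul_le_mul_of_nonneg_right this hbprod.le
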